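/- Let (X, ϱ) be a metric space and let y ∈ X be a limit point of X (every neighbourhood of y contains a point other than y). Let (ϱ_n) be any totally separating system of pseudo-metrics on X and γ > 0. Then there exist z ∈ X with ϱ(z,y) < γ and n₀ ∈ ℕ such that ϱ_n(z, y) ≥ 1/2 for all n ≥ n₀. Consequently, for the Dirac measures, sup_{x ∈ B_ϱ(y,γ)} ‖δ_y − δ_x‖_{ϱ_n} ≥ 1/2 for all n ≥ n₀, where ‖μ₁ − μ₂‖_σ = sup_{φ ∈ Lip_σ(1)} |∫φ dμ₁ − ∫φ dμ₂|. -/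
import Mathlib


noncomputable def wass {X : Type*} (σ : X → X → ℝ) (x y : X) : ℝ :=
  ⨆ φ : {φ : X → ℝ // ∀ u v : X, |φ u - φ v| ≤ σ u v}, |φ.1 x - φ.1 y|

theorem limit_point_separation {X : Type*} [MetricSpace X] (y : X)
    (hy : ∀ ε : ℝ, 0 < ε → ∃ z : X, z ≠ y ∧ dist z y < ε)
    (ρ : ℕ → X → X → ℝ)
    (hrefl : ∀ n x, ρ n x x = 0)
    (hsymm : ∀ n x z, ρ n x z = ρ n z x)
    (htri : ∀ n x z w, ρ n x w ≤ ρ n x z + ρ n z w)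
    (hmono : ∀ n x z, ρ n x z ≤ ρ (n + 1) x z)
    (hcont : ∀ n, Continuous fun p : X × X => ρ n p.1 p.2)
    (hsep : ∀ x z : X, x ≠ z →
      Filter.Tendsto (fun n : ℕ => ρ n x z) Filter.atTop (nhds 1))
    (γ : ℝ) (hγ : 0 < γ) :
    ∃ (z : X) (n₀ : ℕ), dist z y < γ ∧
      (∀ n ≥ n₀, (1 : ℝ) / 2 ≤ ρ n z y) ∧
      (∀ n ≥ n₀, (1 : ℝ) / 2 ≤ wass (ρ n) y z) := by
  obtain ⟨z, hzy, hdist⟩ := hy γ hγ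
  have htend := hsep z y hzy
  have hev : ∀ᶠ n in Filter.atTop, (1 : ℝ) / 2 ≤ ρ n z y := by
    exact htend.eventually (eventually_ge_nhds (by norm_num : (1:ℝ)/2 < 1))
  obtain ⟨n₀, hn₀⟩ := hev.exists_forall_of_atTop
  have hρ : ∀ n ≥ n₀, (1 : ℝ) / 2 ≤ ρ n z y := fun n hn => hn₀ n hn
  refine ⟨z, n₀, hdist, hρ, fun n hn => ?_⟩
  -- take φ u = ρ n u z
  have hlip : ∀ u v : X, |ρ n u z - ρ n v z| ≤ ρ n u v := by
    intro u v
    rw [abs_sub_le_iff]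
    constructor
    · have := htri n u v z
      linarith
    · have := htri n v u z
      have hs := hsymm n v u
      linarith
  have hbdd : BddAbove (Set.range fun φ : {φ : X → ℝ // ∀ u v : X, |φ u - φ v| ≤ ρ n u v} => |φ.1 y - φ.1 z|) := by
    refine ⟨ρ n y z, ?_⟩
    rintro r ⟨φ, rfl⟩
    exact φ.2 y z
  have hle : |ρ n y z - ρ n z z| ≤ wass (ρ n) y z :=
    le_ciSup hbdd (⟨fun u => ρ n u z, hlip⟩ : {φ : X → ℝ // ∀ u v : X, |φ u - φ v| ≤ ρ n u v})
  have h0 : ρ n z z = 0 := hrefl n z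
  have hval : |ρ n y z - ρ n z z| = ρ n y z := by
    rw [h0, sub_zero]
    have h1 := hρ n hn
    rw [hsymm n z y] at h1
    exact abs_of_nonneg (by linarith)
  have h1 := hρ n hn
  rw [hsymm n z y] at h1
  calc (1:ℝ)/2 ≤ ρ n y z := h1
    _ = |ρ n y z - ρ n z z| := hval.symm
    _ ≤ wass (ρ n) y z := hle
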